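/- Let f be a signature of arity n whose support is an affine subspace of ℤ₂ⁿ of dimension k < n, let S ⊆ {1,…,n} with |S| = k be a set of free variables for f, and let a ∈ ℂ with a⁴ = 1. Define the arity-k signature f' by f'(y) = Σ_{x ∈ {0,1}ⁿ, x|_S = y} a^{w(x)} f(x), where w(x) is the number of indices i ∉ S with xᵢ = 1. Then f is affine if and only if f' is affine. -/

import Mathlib

/-- `𝔦^r` for `r ∈ ℤ₄`; well defined since `𝔦⁴ = 1`. -/
noncomputable def iPow (r : ZMod 4) : ℂ := Complex.I ^ r.val

/-- View `0, 1 ∈ ℤ₂` as elements of `ℤ₄`. -/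
def z2z4 (a : ZMod 2) : ZMod 4 := (a.val : ZMod 4)

/-- Evaluation at a `{0,1}`-point of the multilinear polynomial over `ℤ₄` whose
coefficient on the monomial `∏_{i ∈ S} xᵢ` is `c S`. -/
def evalML4 {ι : Type*} [Fintype ι] [DecidableEq ι]
    (c : Finset ι → ZMod 4) (x : ι → ZMod 2) : ZMod 4 :=
  ∑ S : Finset ι, c S * ∏ i ∈ S, z2z4 (x i)

/-- `x` extended by a final coordinate `1` (at `none`). -/
def extend1 {ι : Type*} (x : ι → ZMod 2) : Option ι → ZMod 2 := fun o => o.elim 1 x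

/-- A signature is affine if it is `λ · χ_{A(x,1)ᵀ = 0} · 𝔦^{Q(x)}` for a matrix `A`
over `ℤ₂` and a multilinear polynomial `Q` over `ℤ₄` of total degree at most 2
whose cross terms all have even coefficients. -/
def IsAffine {ι : Type*} [Fintype ι] [DecidableEq ι] (f : (ι → ZMod 2) → ℂ) : Prop :=
  ∃ (lam : ℂ) (m : ℕ) (A : Matrix (Fin m) (Option ι) (ZMod 2))
    (c : Finset ι → ZMod 4),
    (∀ S : Finset ι, 2 < S.card → c S = 0) ∧
    (∀ S : Finset ι, S.card = 2 → ∃ t : ZMod 4, c S = 2 * t) ∧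
    ∀ x : ι → ZMod 2,
      f x = lam * (if A.mulVec (extend1 x) = 0 then 1 else 0) * iPow (evalML4 c x)

/-- `f` has affine support of dimension `k`. -/
def HasAffineSupportDim {ι : Type*} [Fintype ι] (f : (ι → ZMod 2) → ℂ) (k : ℕ) : Prop :=
  ∃ (x₀ : ι → ZMod 2) (V : Submodule (ZMod 2) (ι → ZMod 2)),
    Module.finrank (ZMod 2) ↥V = k ∧ {x | f x ≠ 0} = {x | x + x₀ ∈ V}

namespace CA
open Finset

/- ### GoodD framework -/

def Dq {ι : Type*} (q : (ι → ZMod 2) → ZMod 4) (x y : ι → ZMod 2) : ZMod 4 :=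
  q (x + y) - q x - q y + q 0

def GoodD {ι : Type*} (q : (ι → ZMod 2) → ZMod 4) : Prop :=
  (∀ x y, 2 * Dq q x y = 0) ∧ ∀ x x' y, Dq q (x + x') y = Dq q x y + Dq q x' y

lemma d1_even : ∀ u v : ZMod 2, 2 * (z2z4 (u+v) - z2z4 u - z2z4 v + z2z4 0) = 0 := by decide
lemma d1_add : ∀ u u' v : ZMod 2,
    (z2z4 (u+u'+v) - z2z4 (u+u') - z2z4 v + z2z4 0)
      = (z2z4 (u+v) - z2z4 u - z2z4 v + z2z4 0) + (z2z4 (u'+v) - z2z4 u' - z2z4 v + z2z4 0) := by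
  decide
lemma d2_add : ∀ u₁ u₂ u₁' u₂' v₁ v₂ : ZMod 2,
    2 * (z2z4 (u₁+u₁'+v₁) * z2z4 (u₂+u₂'+v₂) - z2z4 (u₁+u₁') * z2z4 (u₂+u₂')
          - z2z4 v₁ * z2z4 v₂ + z2z4 0 * z2z4 0)
      = 2 * (z2z4 (u₁+v₁) * z2z4 (u₂+v₂) - z2z4 u₁ * z2z4 u₂ - z2z4 v₁ * z2z4 v₂
          + z2z4 0 * z2z4 0)
        + 2 * (z2z4 (u₁'+v₁) * z2z4 (u₂'+v₂) - z2z4 u₁' * z2z4 u₂' - z2z4 v₁ * z2z4 v₂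
          + z2z4 0 * z2z4 0) := by decide
lemma even4 : ∀ r : ZMod 4, 2 * r = 0 → ∃ t : ZMod 4, r = 2 * t := by decide
lemma z2z4_ite : ∀ u : ZMod 2, z2z4 u = if u = 1 then 1 else 0 := by decide

lemma Dq_comm {ι : Type*} (q : (ι → ZMod 2) → ZMod 4) (x y : ι → ZMod 2) :
    Dq q x y = Dq q y x := by unfold Dq; rw [add_comm x y]; ring

lemma key_eval {ι : Type*} [Fintype ι] [DecidableEq ι] (c : Finset ι → ZMod 4)
    (x y : ι → ZMod 2) :
    Dq (evalML4 c) x y = ∑ S : Finset ι, c S *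
      (∏ i ∈ S, z2z4 ((x+y) i) - ∏ i ∈ S, z2z4 (x i) - ∏ i ∈ S, z2z4 (y i)
        + ∏ i ∈ S, z2z4 ((0 : ι → ZMod 2) i)) := by
  unfold Dq evalML4
  rw [← Finset.sum_sub_distrib, ← Finset.sum_sub_distrib, ← Finset.sum_add_distrib]
  exact Finset.sum_congr rfl fun S _ => by ring

lemma goodD_evalML4 {ι : Type*} [Fintype ι] [DecidableEq ι] (c : Finset ι → ZMod 4)
    (h3 : ∀ S : Finset ι, 2 < S.card → c S = 0)
    (h2 : ∀ S : Finset ι, S.card = 2 → ∃ t : ZMod 4, c S = 2 * t) :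
    GoodD (evalML4 c) := by
  constructor
  · intro x y
    rw [key_eval, Finset.mul_sum]
    apply Finset.sum_eq_zero
    intro S _
    rcases Nat.lt_or_ge 2 S.card with h | h
    · rw [h3 S h]; ring
    rcases (show S.card = 0 ∨ S.card = 1 ∨ S.card = 2 by omega) with h0 | h1 | hc2
    · rw [Finset.card_eq_zero.mp h0]; simp
    · obtain ⟨i, rfl⟩ := Finset.card_eq_one.mp h1
      simp only [Finset.prod_singleton, Pi.add_apply, Pi.zero_apply]
      rw [show (2 : ZMod 4) * (c {i} * (z2z4 (x i + y i) - z2z4 (x i) - z2z4 (y i) + z2z4 0))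
          = c {i} * (2 * (z2z4 (x i + y i) - z2z4 (x i) - z2z4 (y i) + z2z4 0)) by ring,
        d1_even, mul_zero]
    · obtain ⟨i, j, hij, rfl⟩ := Finset.card_eq_two.mp hc2
      obtain ⟨t, ht⟩ := h2 _ hc2
      rw [Finset.prod_pair hij, Finset.prod_pair hij, Finset.prod_pair hij,
        Finset.prod_pair hij, ht]
      rw [show (2 : ZMod 4) * (2 * t * (z2z4 ((x+y) i) * z2z4 ((x+y) j)
            - z2z4 (x i) * z2z4 (x j) - z2z4 (y i) * z2z4 (y j)
            + z2z4 ((0:ι → ZMod 2) i) * z2z4 ((0:ι → ZMod 2) j)))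
          = (2*2) * (t * (z2z4 ((x+y) i) * z2z4 ((x+y) j)
            - z2z4 (x i) * z2z4 (x j) - z2z4 (y i) * z2z4 (y j)
            + z2z4 ((0:ι → ZMod 2) i) * z2z4 ((0:ι → ZMod 2) j))) by ring,
        show (2*2 : ZMod 4) = 0 by decide, zero_mul]
  · intro x x' y
    rw [key_eval, key_eval, key_eval, ← Finset.sum_add_distrib]
    apply Finset.sum_congr rfl
    intro S _
    rcases Nat.lt_or_ge 2 S.card with h | h
    · rw [h3 S h]; ring
    rcases (show S.card = 0 ∨ S.card = 1 ∨ S.card = 2 by omega) with h0 | h1 | hc2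
    · rw [Finset.card_eq_zero.mp h0]; simp
    · obtain ⟨i, rfl⟩ := Finset.card_eq_one.mp h1
      simp only [Finset.prod_singleton, Pi.add_apply, Pi.zero_apply]
      rw [d1_add (x i) (x' i) (y i)]; ring
    · obtain ⟨i, j, hij, rfl⟩ := Finset.card_eq_two.mp hc2
      obtain ⟨t, ht⟩ := h2 _ hc2
      simp only [Finset.prod_pair hij, Pi.add_apply, Pi.zero_apply, ht]
      have h := d2_add (x i) (x j) (x' i) (x' j) (y i) (y j)
      linear_combination t * h

lemma goodD_add {ι : Type*} {q q' : (ι → ZMod 2) → ZMod 4} (h : GoodD q) (h' : GoodD q') :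
    GoodD (fun x => q x + q' x) := by
  have key : ∀ x y, Dq (fun x => q x + q' x) x y = Dq q x y + Dq q' x y := by
    intro x y; unfold Dq; ring
  constructor
  · intro x y; rw [key]
    linear_combination h.1 x y + h'.1 x y
  · intro x x' y; rw [key, key, key, h.2, h'.2]; ring

lemma goodD_smul {ι : Type*} (t : ZMod 4) {q : (ι → ZMod 2) → ZMod 4} (h : GoodD q) :
    GoodD (fun x => t * q x) := by
  have key : ∀ x y, Dq (fun x => t * q x) x y = t * Dq q x y := by
    intro x y; unfold Dq; ring
  constructor
  · intro x y; rw [key]; linear_combination t * h.1 x y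
  · intro x x' y; rw [key, key, key, h.2]; ring

lemma goodD_weight {ι : Type*} [DecidableEq ι] (T : Finset ι) :
    GoodD (fun x : ι → ZMod 2 => ∑ i ∈ T, z2z4 (x i)) := by
  have key : ∀ x y : ι → ZMod 2, Dq (fun x : ι → ZMod 2 => ∑ i ∈ T, z2z4 (x i)) x y
      = ∑ i ∈ T, (z2z4 (x i + y i) - z2z4 (x i) - z2z4 (y i) + z2z4 0) := by
    intro x y; unfold Dq
    rw [← Finset.sum_sub_distrib, ← Finset.sum_sub_distrib, ← Finset.sum_add_distrib]
    exact Finset.sum_congr rfl fun i _ => by simp [Pi.add_apply]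
  constructor
  · intro x y; rw [key, Finset.mul_sum]
    exact Finset.sum_eq_zero fun i _ => d1_even _ _
  · intro x x' y; rw [key, key, key, ← Finset.sum_add_distrib]
    exact Finset.sum_congr rfl fun i _ => by
      simpa [Pi.add_apply] using d1_add (x i) (x' i) (y i)

lemma add_self_fun {ι : Type*} (v : ι → ZMod 2) : v + v = 0 := by
  funext i
  show v i + v i = 0
  generalize v i = u; revert u; decide

lemma goodD_shift {ι : Type*} {q : (ι → ZMod 2) → ZMod 4} (h : GoodD q)
    (b u v : ι → ZMod 2) :
    q (u + v + b) - q (u + b) - q (v + b) + q b = Dq q u v := by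
  have hh := h.2 u b v
  unfold Dq at hh ⊢
  rw [show u + b + v = u + v + b from add_right_comm u b v, add_comm b v] at hh
  linear_combination hh

lemma goodD_comp {ι κ : Type*} {q : (ι → ZMod 2) → ZMod 4} (h : GoodD q)
    (σ : (κ → ZMod 2) → (ι → ZMod 2)) (hσ : ∀ y z, σ (y + z) = σ y + σ z + σ 0) :
    GoodD (fun y => q (σ y)) := by
  have key : ∀ y z, Dq (fun y => q (σ y)) y z = Dq q (σ y + σ 0) (σ z + σ 0) := by
    intro y z
    have e1 : σ y + σ 0 + (σ z + σ 0) + σ 0 = σ y + σ z + σ 0 + (σ 0 + σ 0) := by abel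
    rw [add_self_fun, add_zero] at e1
    have e2 : σ y + σ 0 + σ 0 = σ y + (σ 0 + σ 0) := by abel
    rw [add_self_fun, add_zero] at e2
    have e3 : σ z + σ 0 + σ 0 = σ z + (σ 0 + σ 0) := by abel
    rw [add_self_fun, add_zero] at e3
    have hs := goodD_shift h (σ 0) (σ y + σ 0) (σ z + σ 0)
    rw [e1, e2, e3] at hs
    show q (σ (y + z)) - q (σ y) - q (σ z) + q (σ 0) = _
    rw [hσ y z]
    exact hs
  constructor
  · intro y z; rw [key]; exact h.1 _ _
  · intro y y' z
    rw [key, key, key]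
    have e : σ (y + y') + σ 0 = σ y + σ 0 + (σ y' + σ 0) := by
      rw [hσ y y']; abel
    rw [e, h.2]

/- ### Reconstruction -/

variable {ι : Type*} [Fintype ι] [DecidableEq ι]

def chi (T : Finset ι) : ι → ZMod 2 := fun i => if i ∈ T then 1 else 0

omit [Fintype ι] in
lemma chi_empty : chi (∅ : Finset ι) = 0 := by funext i; simp [chi]

omit [Fintype ι] in
lemma chi_insert {i : ι} {T : Finset ι} (h : i ∉ T) :
    chi (insert i T) = chi T + chi {i} := by
  funext j
  show (if j ∈ insert i T then (1:ZMod 2) else 0)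
    = (if j ∈ T then 1 else 0) + (if j ∈ ({i} : Finset ι) then 1 else 0)
  by_cases hj : j = i
  · subst hj; simp [h]
  · by_cases hjT : j ∈ T <;> simp [hj, hjT]

omit [Fintype ι] [DecidableEq ι] in
lemma Dq_zero_left {q : (ι → ZMod 2) → ZMod 4} (h : GoodD q) (v : ι → ZMod 2) :
    Dq q 0 v = 0 := by
  have := h.2 0 0 v
  rw [add_zero] at this
  linear_combination -this

omit [Fintype ι] in
lemma Dq_chi_sum {q : (ι → ZMod 2) → ZMod 4} (h : GoodD q) (T : Finset ι) (v : ι → ZMod 2) :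
    Dq q (chi T) v = ∑ j ∈ T, Dq q (chi {j}) v := by
  induction T using Finset.induction_on with
  | empty => rw [chi_empty, Dq_zero_left h, Finset.sum_empty]
  | insert _ _ hiT =>
    rename_i i T ih
    rw [chi_insert hiT, h.2, ih, Finset.sum_insert hiT]
    ring

theorem goodD_exists {q : (ι → ZMod 2) → ZMod 4} (hq : GoodD q) :
    ∃ c : Finset ι → ZMod 4,
      (∀ S : Finset ι, 2 < S.card → c S = 0) ∧
      (∀ S : Finset ι, S.card = 2 → ∃ t : ZMod 4, c S = 2 * t) ∧
      ∀ x, q x = evalML4 c x := by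
  set c : Finset ι → ZMod 4 := fun T =>
    if T.card ≤ 2 then ∑ U ∈ T.powerset, (-1 : ZMod 4) ^ (T.card - U.card) * q (chi U)
    else 0 with hc
  have hcempty : c ∅ = q 0 := by
    simp [hc, Finset.powerset_empty, chi_empty]
  have hcsingle : ∀ i : ι, c {i} = q (chi {i}) - q 0 := by
    intro i
    rw [hc]
    simp only [Finset.card_singleton]
    rw [if_pos (by norm_num), show ({i} : Finset ι) = insert i ∅ from rfl,
      Finset.sum_powerset_insert (Finset.notMem_empty i), Finset.powerset_empty,
      Finset.sum_singleton, Finset.sum_singleton]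
    simp [chi_empty]
    ring
  have hcpair : ∀ i j : ι, i ≠ j → c {i, j} = Dq q (chi {i}) (chi {j}) := by
    intro i j hij
    have hij' : i ∉ ({j} : Finset ι) := by simp [hij]
    rw [hc]
    simp only [Finset.card_pair hij]
    rw [if_pos (by norm_num)]
    rw [show ({i, j} : Finset ι) = insert i {j} from rfl,
      Finset.sum_powerset_insert hij',
      show ({j} : Finset ι) = insert j ∅ from rfl,
      Finset.sum_powerset_insert (Finset.notMem_empty j), Finset.powerset_empty,
      Finset.sum_singleton, Finset.sum_singleton,
      Finset.sum_powerset_insert (Finset.notMem_empty j), Finset.powerset_empty,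
      Finset.sum_singleton, Finset.sum_singleton]
    have hchi : chi ({i, j} : Finset ι) = chi {i} + chi {j} := by
      rw [show ({i, j} : Finset ι) = insert i {j} from rfl, chi_insert hij', add_comm]
    unfold Dq
    simp only [LawfulSingleton.insert_empty_eq]
    rw [← hchi]
    simp only [Finset.card_empty, Finset.card_singleton, insert_empty_eq,
      Finset.card_insert_of_notMem hij', chi_empty]
    norm_num
    ring
  have hmain : ∀ T : Finset ι, ∑ S ∈ T.powerset, c S = q (chi T) := by
    intro T
    induction T using Finset.induction_on with
    | empty => rw [Finset.powerset_empty, Finset.sum_singleton, hcempty, chi_empty]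
    | insert _ _ hiT =>
      rename_i i T ih
      rw [Finset.sum_powerset_insert hiT, ih]
      have hsplit : ∑ S ∈ T.powerset, c (insert i S)
          = c {i} + ∑ j ∈ T, c {i, j} := by
        rw [← Finset.sum_filter_add_sum_filter_not T.powerset (fun S => S.card = 0)
          (fun S => c (insert i S))]
        have h1 : T.powerset.filter (fun S => S.card = 0) = {∅} := by
          ext S
          simp only [Finset.mem_filter, Finset.mem_powerset, Finset.card_eq_zero,
            Finset.mem_singleton]
          exact ⟨fun h => h.2, fun h => ⟨h ▸ Finset.empty_subset T, h⟩⟩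
        have h2 : ∑ S ∈ T.powerset.filter (fun S => ¬S.card = 0), c (insert i S)
            = ∑ j ∈ T, c {i, j} := by
          rw [← Finset.sum_filter_add_sum_filter_not
            (T.powerset.filter (fun S => ¬S.card = 0)) (fun S => S.card = 1)
            (fun S => c (insert i S))]
          have h3 : (T.powerset.filter (fun S => ¬S.card = 0)).filter (fun S => S.card = 1)
              = T.image (fun j => {j}) := by
            ext S
            simp only [Finset.mem_filter, Finset.mem_powerset, Finset.mem_image,
              Finset.card_eq_one]
            constructor
            · rintro ⟨⟨hsub, -⟩, a, rfl⟩
              exact ⟨a, hsub (Finset.mem_singleton_self a), rfl⟩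
            · rintro ⟨a, ha, rfl⟩
              exact ⟨⟨Finset.singleton_subset_iff.mpr ha, by simp⟩, a, rfl⟩
          have h4 : ∑ S ∈ (T.powerset.filter (fun S => ¬S.card = 0)).filter
                (fun S => ¬S.card = 1), c (insert i S) = 0 := by
            apply Finset.sum_eq_zero
            intro S hS
            simp only [Finset.mem_filter, Finset.mem_powerset] at hS
            obtain ⟨⟨hsub, h0⟩, h1'⟩ := hS
            have hiS : i ∉ S := fun hmem => hiT (hsub hmem)
            rw [hc]
            dsimp only
            rw [if_neg]
            rw [Finset.card_insert_of_notMem hiS]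
            omega
          rw [h3, h4, add_zero, Finset.sum_image (fun a _ b _ h =>
            Finset.singleton_injective h)]
        rw [h1, Finset.sum_singleton, h2, LawfulSingleton.insert_empty_eq]
      rw [hsplit]
      have hchI : chi (insert i T) = chi T + chi {i} := chi_insert hiT
      rw [hchI]
      have hDq : q (chi T + chi {i})
          = Dq q (chi T) (chi {i}) + q (chi T) + q (chi {i}) - q 0 := by
        unfold Dq; ring
      rw [hDq, Dq_chi_sum hq, hcsingle]
      rw [Finset.sum_congr rfl (fun j hj => hcpair i j (fun h => hiT (h ▸ hj)))]
      rw [Finset.sum_congr rfl (fun j _ => Dq_comm q (chi {j}) (chi {i}))]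
      ring
  refine ⟨c, ?_, ?_, ?_⟩
  · intro S hS; rw [hc]; dsimp only; rw [if_neg (by omega)]
  · intro S hS
    obtain ⟨i, j, hij, rfl⟩ := Finset.card_eq_two.mp hS
    rw [hcpair i j hij]
    exact even4 _ (hq.1 _ _)
  · intro x
    set T : Finset ι := Finset.univ.filter (fun i => x i = 1) with hT
    have hx : x = chi T := by
      funext j
      rw [show chi T j = if x j = 1 then 1 else 0 by simp [chi, hT]]
      generalize x j = u; revert u; decide
    rw [hx]
    symm
    unfold evalML4
    have hprod : ∀ S : Finset ι, (∏ i ∈ S, z2z4 (chi T i)) = if S ⊆ T then 1 else 0 := by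
      intro S
      by_cases hsub : S ⊆ T
      · rw [if_pos hsub]
        apply Finset.prod_eq_one
        intro i hi
        have : chi T i = 1 := by simp [chi, hsub hi]
        rw [this]; rfl
      · rw [if_neg hsub]
        obtain ⟨i, hiS, hiT⟩ := Finset.not_subset.mp hsub
        apply Finset.prod_eq_zero hiS
        have : chi T i = 0 := by simp [chi, hiT]
        rw [this]; rfl
    calc ∑ S : Finset ι, c S * ∏ i ∈ S, z2z4 (chi T i)
        = ∑ S : Finset ι, if S ∈ T.powerset then c S else 0 := by
          apply Finset.sum_congr rfl
          intro S _
          rw [hprod S]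
          by_cases h : S ⊆ T <;> simp [Finset.mem_powerset, h]
      _ = ∑ S ∈ T.powerset, c S := by
          rw [Finset.sum_ite_mem, Finset.univ_inter]
      _ = q (chi T) := hmain T

/- ### iPow lemmas -/

lemma iPow_ne_zero (r : ZMod 4) : iPow r ≠ 0 := pow_ne_zero _ Complex.I_ne_zero

lemma I_pow_nat (m : ℕ) : Complex.I ^ m = iPow (m : ZMod 4) := by
  unfold iPow
  rw [ZMod.val_natCast]
  conv_lhs => rw [show m = 4 * (m / 4) + m % 4 from (Nat.div_add_mod m 4).symm]
  rw [pow_add, pow_mul, Complex.I_pow_four, one_pow, one_mul]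

lemma iPow_add (r s : ZMod 4) : iPow (r + s) = iPow r * iPow s := by
  have : ((r.val + s.val : ℕ) : ZMod 4) = r + s := by
    push_cast [ZMod.natCast_val, ZMod.cast_id]
    ring
  rw [← this, ← I_pow_nat, pow_add]
  rfl

lemma pow_eq_iPow {b : ℂ} {r : ZMod 4} (hb : b = iPow r) (m : ℕ) :
    b ^ m = iPow ((m : ZMod 4) * r) := by
  subst hb
  unfold iPow
  rw [← pow_mul, I_pow_nat]
  congr 1
  push_cast [ZMod.natCast_val, ZMod.cast_id]
  ring

lemma exists_root (a : ℂ) (ha : a ^ 4 = 1) : ∃ s : ZMod 4, a = iPow s := by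
  have h4 : (a - 1) * ((a + 1) * ((a - Complex.I) * (a + Complex.I))) = 0 := by
    have hI := Complex.I_sq
    linear_combination ha + (1 - a ^ 2) * hI
  have i0 : iPow 0 = 1 := by
    show Complex.I ^ (0 : ZMod 4).val = 1
    norm_num [show (0 : ZMod 4).val = 0 from rfl]
  have i1 : iPow 1 = Complex.I := by
    show Complex.I ^ (1 : ZMod 4).val = Complex.I
    norm_num [show (1 : ZMod 4).val = 1 from rfl]
  have i2 : iPow 2 = -1 := by
    show Complex.I ^ (2 : ZMod 4).val = -1
    rw [show (2 : ZMod 4).val = 2 from rfl, Complex.I_sq]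
  have i3 : iPow 3 = -Complex.I := by
    show Complex.I ^ (3 : ZMod 4).val = -Complex.I
    rw [show (3 : ZMod 4).val = 3 from rfl, pow_succ, Complex.I_sq]
    ring
  rcases mul_eq_zero.mp h4 with h | h
  · exact ⟨0, by rw [i0]; linear_combination h⟩
  rcases mul_eq_zero.mp h with h | h
  · exact ⟨2, by rw [i2]; linear_combination h⟩
  rcases mul_eq_zero.mp h with h | h
  · exact ⟨1, by rw [i1]; linear_combination h⟩
  · exact ⟨3, by rw [i3]; linear_combination h⟩

/- ### matrix for affine support -/

lemma exists_matrix {n : ℕ} (V : Submodule (ZMod 2) (Fin n → ZMod 2))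
    (x₀ : Fin n → ZMod 2) :
    ∃ (m : ℕ) (A : Matrix (Fin m) (Option (Fin n)) (ZMod 2)),
      ∀ x, (A.mulVec (extend1 x) = 0 ↔ x + x₀ ∈ V) := by
  obtain ⟨W, hW⟩ := V.exists_isCompl
  let proj := W.linearProjOfIsCompl V hW.symm
  have hker : LinearMap.ker proj = V := Submodule.linearProjOfIsCompl_ker hW.symm
  let m := Module.finrank (ZMod 2) W
  let b : Module.Basis (Fin m) (ZMod 2) W := Module.finBasis (ZMod 2) W
  let ψ : (Fin n → ZMod 2) →ₗ[ZMod 2] (Fin m → ZMod 2) :=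
    (b.equivFun.toLinearMap).comp proj
  have hkerψ : LinearMap.ker ψ = V := by
    rw [LinearMap.ker_comp, LinearEquiv.ker, Submodule.comap_bot, hker]
  let A₀ := LinearMap.toMatrix' ψ
  have hA₀ : ∀ v, A₀.mulVec v = ψ v := by
    intro v
    rw [show A₀.mulVec v = Matrix.toLin' A₀ v from rfl, Matrix.toLin'_toMatrix']
  let A : Matrix (Fin m) (Option (Fin n)) (ZMod 2) :=
    Matrix.of (fun r o => o.elim (A₀.mulVec x₀ r) (fun j => A₀ r j))
  refine ⟨m, A, fun x => ?_⟩
  have hmv : A.mulVec (extend1 x) = ψ (x + x₀) := by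
    funext r
    show dotProduct (A r) (extend1 x) = _
    rw [dotProduct, Fintype.sum_option]
    show A₀.mulVec x₀ r * 1 + ∑ j, A₀ r j * x j = ψ (x + x₀) r
    rw [mul_one, map_add, ← hA₀ x, ← hA₀ x₀]
    show A₀.mulVec x₀ r + A₀.mulVec x r = A₀.mulVec x r + A₀.mulVec x₀ r
    ring
  rw [hmv, ← hkerψ]
  exact ⟨fun h => LinearMap.mem_ker.mpr h, fun h => LinearMap.mem_ker.mp h⟩

end CA

theorem compressed_affine_iff (n k : ℕ) (hk : k < n)
    (f : (Fin n → ZMod 2) → ℂ)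
    (hsupp : HasAffineSupportDim f k)
    (S : Finset (Fin n)) (hScard : S.card = k)
    (hfree : Set.BijOn (fun (x : Fin n → ZMod 2) => (fun i : {i // i ∈ S} => x i.1))
      {x | f x ≠ 0} Set.univ)
    (a : ℂ) (ha : a ^ 4 = 1)
    (f' : ({i // i ∈ S} → ZMod 2) → ℂ)
    (hf' : ∀ y, f' y = ∑ x : Fin n → ZMod 2,
      if ∀ i : {i // i ∈ S}, x i.1 = y i then
        a ^ (Finset.univ.filter (fun i => i ∉ S ∧ x i = 1)).card * f x
      else 0) :
    IsAffine f ↔ IsAffine f' := by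
  classical
  obtain ⟨x₀, V, hdim, hset⟩ := hsupp
  set π : (Fin n → ZMod 2) → ({i // i ∈ S} → ZMod 2) :=
    fun x => fun i : {i // i ∈ S} => x i.1 with hπdef
  have hmem' : ∀ x, f x ≠ 0 ↔ x + x₀ ∈ V := fun x => Set.ext_iff.mp hset x
  -- the section σ of π on the support
  choose σ hσmem hσπ using fun y => hfree.2.2 (Set.mem_univ y)
  have huniq : ∀ x, f x ≠ 0 → σ (π x) = x := fun x hx =>
    hfree.2.1 (hσmem _) hx (hσπ (π x))
  have hσaff : ∀ y z, σ (y + z) = σ y + σ z + σ 0 := by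
    intro y z
    have key : (σ y + x₀) + ((σ z + x₀) + (σ 0 + x₀))
        = σ y + σ z + σ 0 + x₀ + (x₀ + x₀) := by abel
    rw [CA.add_self_fun, add_zero] at key
    have hm : f (σ y + σ z + σ 0) ≠ 0 := by
      rw [hmem']
      rw [← key]
      exact V.add_mem ((hmem' _).mp (hσmem y))
        (V.add_mem ((hmem' _).mp (hσmem z)) ((hmem' _).mp (hσmem 0)))
    have hπsum : π (σ y + σ z + σ 0) = y + z := by
      funext i
      show (σ y + σ z + σ 0) i.1 = (y + z) i
      simp only [Pi.add_apply]
      rw [show σ y i.1 = y i from congrFun (hσπ y) i,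
        show σ z i.1 = z i from congrFun (hσπ z) i,
        show σ 0 i.1 = (0 : {i // i ∈ S} → ZMod 2) i from congrFun (hσπ 0) i]
      simp
    exact hfree.2.1 (hσmem (y + z)) hm (by rw [hσπ, hπsum])
  -- weights
  obtain ⟨s₄, hs₄⟩ := CA.exists_root a ha
  set Tc : Finset (Fin n) := Finset.univ.filter (fun i => i ∉ S) with hTcdef
  set W : (Fin n → ZMod 2) → ZMod 4 := fun x => ∑ i ∈ Tc, z2z4 (x i) with hWdef
  set wc : (Fin n → ZMod 2) → ℕ :=
    fun x => (Finset.univ.filter (fun i => i ∉ S ∧ x i = 1)).card with hwcdef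
  have castw : ∀ x, ((wc x : ℕ) : ZMod 4) = W x := by
    intro x
    rw [hWdef]
    dsimp only
    rw [Finset.sum_congr rfl (fun i _ => CA.z2z4_ite (x i)), Finset.sum_boole,
      hTcdef, Finset.filter_filter, hwcdef]
  have apow : ∀ x, a ^ wc x = iPow (W x * s₄) := by
    intro x
    rw [CA.pow_eq_iPow hs₄ (wc x), castw x]
  have ha0 : a ≠ 0 := by
    intro h; rw [h] at ha; norm_num at ha
  have hf'' : ∀ y, f' y = ∑ x : Fin n → ZMod 2,
      if ∀ i : {i // i ∈ S}, x i.1 = y i then a ^ wc x * f x else 0 := hf'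
  have hf'σ : ∀ y, f' y = a ^ wc (σ y) * f (σ y) := by
    intro y
    rw [hf'' y]
    rw [Finset.sum_eq_single_of_mem (σ y) (Finset.mem_univ _) ?_]
    · rw [if_pos (fun i => congrFun (hσπ y) i)]
    · intro x _ hxne
      by_cases hcond : ∀ i : {i // i ∈ S}, x i.1 = y i
      · rw [if_pos hcond]
        by_cases hfx : f x = 0
        · rw [hfx, mul_zero]
        · exfalso
          apply hxne
          have hπx : π x = y := funext hcond
          calc x = σ (π x) := (huniq x hfx).symm
            _ = σ y := by rw [hπx]
      · rw [if_neg hcond]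
  have f'ne : ∀ y, f' y ≠ 0 := by
    intro y
    rw [hf'σ y]
    exact mul_ne_zero (pow_ne_zero _ ha0) (hσmem y)
  constructor
  · -- forward
    rintro ⟨lam, m, A, c, hc3, hc2, hform⟩
    have hval : ∀ y, f (σ y) = lam * iPow (evalML4 c (σ y)) := by
      intro y
      have h := hform (σ y)
      by_cases hind : A.mulVec (extend1 (σ y)) = 0
      · rw [h, if_pos hind, mul_one]
      · exfalso
        apply hσmem y
        rw [h, if_neg hind]
        ring
    have hgood : CA.GoodD (fun y => evalML4 c (σ y) + s₄ * W (σ y)) :=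
      CA.goodD_comp (CA.goodD_add (CA.goodD_evalML4 c hc3 hc2)
        (CA.goodD_smul s₄ (CA.goodD_weight Tc))) σ hσaff
    obtain ⟨c', hc3', hc2', heq⟩ := CA.goodD_exists hgood
    refine ⟨lam, 0, 0, c', hc3', hc2', ?_⟩
    intro y
    rw [if_pos (Matrix.zero_mulVec _), mul_one, ← heq y]
    rw [hf'σ y, hval y, apow (σ y), CA.iPow_add, mul_comm s₄ (W (σ y))]
    ring
  · -- backward
    rintro ⟨lam, m, A', c', hc3', hc2', hform'⟩
    have hind1 : ∀ y, A'.mulVec (extend1 y) = 0 := by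
      intro y
      by_contra hne
      apply f'ne y
      rw [hform' y, if_neg hne]
      ring
    have hval' : ∀ y, f' y = lam * iPow (evalML4 c' y) := by
      intro y
      rw [hform' y, if_pos (hind1 y), mul_one]
    obtain ⟨m₂, A, hA⟩ := CA.exists_matrix V x₀
    have hπaff : ∀ y z : Fin n → ZMod 2, π (y + z) = π y + π z + π 0 := by
      intro y z
      funext i
      show (y + z) i.1 = y i.1 + z i.1 + (0 : Fin n → ZMod 2) i.1
      simp
    have hgood : CA.GoodD (fun x => evalML4 c' (π x) + (3 * s₄) * W x) :=
      CA.goodD_add (CA.goodD_comp (CA.goodD_evalML4 c' hc3' hc2') π hπaff)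
        (CA.goodD_smul (3 * s₄) (CA.goodD_weight Tc))
    obtain ⟨c, hc3, hc2, heq⟩ := CA.goodD_exists hgood
    refine ⟨lam, m₂, A, c, hc3, hc2, ?_⟩
    intro x
    by_cases hfx : f x = 0
    · rw [hfx, if_neg, mul_zero, zero_mul]
      intro h
      exact ((hmem' x).mpr ((hA x).mp h)) hfx
    · rw [if_pos ((hA x).mpr ((hmem' x).mp hfx)), mul_one, ← heq x]
      have hx : σ (π x) = x := huniq x hfx
      have h1 : f' (π x) = a ^ wc x * f x := by rw [hf'σ (π x), hx]
      have h2 : f x = (a ^ 3) ^ wc x * f' (π x) := by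
        rw [h1, ← mul_assoc, ← mul_pow, show a ^ 3 * a = a ^ 4 by ring, ha, one_pow,
          one_mul]
      have ha3 : a ^ 3 = iPow (3 * s₄) := by
        rw [CA.pow_eq_iPow hs₄ 3]
        norm_num
      have h3 : (a ^ 3) ^ wc x = iPow (W x * (3 * s₄)) := by
        rw [CA.pow_eq_iPow ha3 (wc x), castw x]
      rw [h2, hval' (π x), h3, CA.iPow_add, mul_comm (3 * s₄) (W x)]
      ring
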